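/- As n → ∞, the quantity q_n = ∑_{l=1}^{⌊n/2⌋} (-1)^{l-1} n_[2l] / (2^l · l! · (n-1)^{2l}) converges to 1 - e^{-1/2}. -/

import Mathlib

open Finset Filter

noncomputable def scrTerm (n l : ℕ) : ℝ :=
  (-1 : ℝ) ^ (l - 1) * (n.descFactorial (2 * l) : ℝ) /
    (2 ^ l * (l.factorial : ℝ) * ((n : ℝ) - 1) ^ (2 * l))

noncomputable def scrG (n l : ℕ) : ℝ := if l ∈ Finset.Icc 1 (n / 2) then scrTerm n l else 0

noncomputable def scrL (l : ℕ) : ℝ :=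
  if 1 ≤ l then (-1 : ℝ) ^ (l - 1) / (2 ^ l * (l.factorial : ℝ)) else 0

lemma cast_descFactorial_real {n k : ℕ} (h : k ≤ n) :
    ((n.descFactorial k : ℕ) : ℝ) = ∏ i ∈ Finset.range k, ((n : ℝ) - i) := by
  rw [Nat.descFactorial_eq_prod_range]
  push_cast
  refine Finset.prod_congr rfl fun i hi => ?_
  rw [Nat.cast_sub (le_trans (le_of_lt (Finset.mem_range.mp hi)) h)]

lemma ratio_tendsto (c : ℝ) :
    Tendsto (fun n : ℕ => ((n : ℝ) - c) / ((n : ℝ) - 1)) atTop (nhds 1) := by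
  have h1 : Tendsto (fun n : ℕ => (n : ℝ) - 1) atTop atTop :=
    tendsto_atTop_add_const_right _ (-1) tendsto_natCast_atTop_atTop
  have h2 : Tendsto (fun n : ℕ => (1 - c) / ((n : ℝ) - 1)) atTop (nhds 0) :=
    Tendsto.div_atTop tendsto_const_nhds h1
  have h3 : Tendsto (fun n : ℕ => 1 + (1 - c) / ((n : ℝ) - 1)) atTop (nhds (1 + 0)) :=
    tendsto_const_nhds.add h2
  rw [add_zero] at h3
  refine h3.congr' ?_
  filter_upwards [eventually_ge_atTop 2] with n hn
  have hne : (n : ℝ) - 1 ≠ 0 := by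
    have : (2 : ℝ) ≤ (n : ℝ) := by exact_mod_cast hn
    linarith
  field_simp
  ring

lemma desc_ratio_tendsto (l : ℕ) :
    Tendsto (fun n : ℕ => (n.descFactorial (2 * l) : ℝ) / ((n : ℝ) - 1) ^ (2 * l))
      atTop (nhds 1) := by
  have h : Tendsto (fun n : ℕ => ∏ i ∈ Finset.range (2 * l), (((n : ℝ) - i) / ((n : ℝ) - 1)))
      atTop (nhds (∏ i ∈ Finset.range (2 * l), (1 : ℝ))) :=
    tendsto_finset_prod _ fun i _ => ratio_tendsto i
  rw [Finset.prod_const_one] at h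
  refine h.congr' ?_
  filter_upwards [eventually_ge_atTop (2 * l)] with n hn
  rw [cast_descFactorial_real hn, Finset.prod_div_distrib, Finset.prod_const]
  simp

lemma scrG_tendsto (l : ℕ) : Tendsto (fun n : ℕ => scrG n l) atTop (nhds (scrL l)) := by
  rcases Nat.eq_zero_or_pos l with rfl | hl
  · simp [scrG, scrL]
  · have key : Tendsto (fun n : ℕ => scrTerm n l) atTop
        (nhds ((-1 : ℝ) ^ (l - 1) / (2 ^ l * (l.factorial : ℝ)))) := by
      have h := (desc_ratio_tendsto l).const_mul ((-1 : ℝ) ^ (l - 1) / (2 ^ l * (l.factorial : ℝ)))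
      rw [mul_one] at h
      refine h.congr fun n => ?_
      unfold scrTerm
      field_simp
    have : scrL l = (-1 : ℝ) ^ (l - 1) / (2 ^ l * (l.factorial : ℝ)) := by
      have hl' : 1 ≤ l := hl
      unfold scrL
      rw [if_pos hl']
    rw [this]
    refine key.congr' ?_
    filter_upwards [eventually_ge_atTop (2 * l)] with n hn
    have : l ∈ Finset.Icc 1 (n / 2) := by
      rw [Finset.mem_Icc]
      exact ⟨hl, Nat.le_div_iff_mul_le (by norm_num) |>.mpr (by omega)⟩
    simp [scrG, this]

lemma scrG_bound (n l : ℕ) : ‖scrG n l‖ ≤ Real.exp 2 * ((1 / 2) ^ l / (l.factorial : ℝ)) := by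
  unfold scrG
  split_ifs with h
  · rw [Finset.mem_Icc] at h
    obtain ⟨hl1, hl2⟩ := h
    have hn2l : 2 * l ≤ n := by omega
    have hn2 : 2 ≤ n := by omega
    have hn1pos : (0 : ℝ) < (n : ℝ) - 1 := by
      have : (2 : ℝ) ≤ (n : ℝ) := by exact_mod_cast hn2
      linarith
    have hpow : (0 : ℝ) < ((n : ℝ) - 1) ^ (2 * l) := pow_pos hn1pos _
    -- key: (n : ℝ) ^ (2*l) ≤ exp 2 * ((n:ℝ)-1)^(2*l)
    have hkey : ((n : ℝ)) ^ (2 * l) ≤ Real.exp 2 * ((n : ℝ) - 1) ^ (2 * l) := by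
      have h1 : (n : ℝ) ≤ ((n : ℝ) - 1) * Real.exp (1 / ((n : ℝ) - 1)) := by
        have := Real.add_one_le_exp (1 / ((n : ℝ) - 1))
        calc (n : ℝ) = ((n : ℝ) - 1) * (1 / ((n : ℝ) - 1) + 1) := by
              field_simp
              ring
          _ ≤ ((n : ℝ) - 1) * Real.exp (1 / ((n : ℝ) - 1)) := by
              exact mul_le_mul_of_nonneg_left this (le_of_lt hn1pos)
      calc ((n : ℝ)) ^ (2 * l) ≤ (((n : ℝ) - 1) * Real.exp (1 / ((n : ℝ) - 1))) ^ (2 * l) := by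
            apply pow_le_pow_left₀ (by positivity) h1
        _ = ((n : ℝ) - 1) ^ (2 * l) * Real.exp (1 / ((n : ℝ) - 1)) ^ (2 * l) := mul_pow _ _ _
        _ = ((n : ℝ) - 1) ^ (2 * l) * Real.exp ((2 * l) / ((n : ℝ) - 1)) := by
            rw [← Real.exp_nat_mul]
            push_cast
            ring_nf
        _ ≤ ((n : ℝ) - 1) ^ (2 * l) * Real.exp 2 := by
            apply mul_le_mul_of_nonneg_left _ (le_of_lt hpow)
            apply Real.exp_le_exp.mpr
            rw [div_le_iff₀ hn1pos]
            have hln : (l : ℝ) ≤ (n : ℝ) - 1 := by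
              have : l + 1 ≤ n := by omega
              have : ((l : ℝ)) + 1 ≤ (n : ℝ) := by exact_mod_cast this
              linarith
            push_cast
            linarith
        _ = Real.exp 2 * ((n : ℝ) - 1) ^ (2 * l) := mul_comm _ _
    have hdesc : ((n.descFactorial (2 * l) : ℕ) : ℝ) ≤ ((n : ℝ)) ^ (2 * l) := by
      exact_mod_cast Nat.descFactorial_le_pow n (2 * l)
    have hfac : (0 : ℝ) < (l.factorial : ℝ) := by exact_mod_cast Nat.factorial_pos l
    have h2l : (0 : ℝ) < (2 : ℝ) ^ l := by positivity
    rw [Real.norm_eq_abs]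
    unfold scrTerm
    rw [abs_div, abs_mul]
    have habs1 : |(-1 : ℝ) ^ (l - 1)| = 1 := by
      rw [abs_pow, abs_neg, abs_one, one_pow]
    rw [habs1, one_mul]
    have habs2 : |(2 : ℝ) ^ l * (l.factorial : ℝ) * ((n : ℝ) - 1) ^ (2 * l)|
        = 2 ^ l * (l.factorial : ℝ) * ((n : ℝ) - 1) ^ (2 * l) := by
      rw [abs_of_pos (by positivity)]
    rw [habs2, Nat.abs_cast]
    rw [div_le_iff₀ (by positivity)]
    calc ((n.descFactorial (2 * l) : ℕ) : ℝ) ≤ ((n : ℝ)) ^ (2 * l) := hdesc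
      _ ≤ Real.exp 2 * ((n : ℝ) - 1) ^ (2 * l) := hkey
      _ = Real.exp 2 * ((1 / 2) ^ l / (l.factorial : ℝ))
            * (2 ^ l * (l.factorial : ℝ) * ((n : ℝ) - 1) ^ (2 * l)) := by
          field_simp
          ring_nf
          rw [← mul_pow]
          norm_num
  · simp
    positivity

lemma scrL_tsum : ∑' l, scrL l = 1 - Real.exp (-1 / 2) := by
  have hexp : HasSum (fun l : ℕ => ((-1 : ℝ) / 2) ^ l / (l.factorial : ℝ)) (Real.exp (-1 / 2)) := by
    rw [Real.exp_eq_exp_ℝ]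
    exact NormedSpace.expSeries_div_hasSum_exp ((-1 : ℝ) / 2)
  have hind : HasSum (fun l : ℕ => if l = 0 then (1 : ℝ) else 0) 1 :=
    hasSum_ite_eq (0 : ℕ) (1 : ℝ)
  have heq : ∀ l : ℕ, scrL l
      = (if l = 0 then (1 : ℝ) else 0) + (-(((-1 : ℝ) / 2) ^ l / (l.factorial : ℝ))) := by
    intro l
    rcases Nat.eq_zero_or_pos l with rfl | hl
    · simp [scrL]
    · have hl0 : l ≠ 0 := by omega
      obtain ⟨m, rfl⟩ : ∃ m, l = m + 1 := ⟨l - 1, (Nat.succ_pred_eq_of_pos hl).symm⟩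
      have hl' : 1 ≤ m + 1 := hl
      unfold scrL
      rw [if_pos hl', if_neg hl0, zero_add, Nat.add_sub_cancel]
      rw [div_pow, pow_succ]
      have hf : ((m + 1).factorial : ℝ) ≠ 0 := by exact_mod_cast (m + 1).factorial_ne_zero
      field_simp
      ring
  have h2 := (hind.add hexp.neg).tsum_eq
  calc ∑' l, scrL l
      = ∑' l, ((if l = 0 then (1 : ℝ) else 0) + (-(((-1 : ℝ) / 2) ^ l / (l.factorial : ℝ)))) :=
        tsum_congr heq
    _ = 1 + -Real.exp (-1 / 2) := h2
    _ = 1 - Real.exp (-1 / 2) := by ring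

theorem stmt_8 :
    Tendsto (fun n : ℕ =>
        ∑ l ∈ Finset.Icc 1 (n / 2),
          (-1 : ℝ) ^ (l - 1) * (n.descFactorial (2 * l) : ℝ) /
            (2 ^ l * (l.factorial : ℝ) * ((n : ℝ) - 1) ^ (2 * l)))
      atTop (nhds (1 - Real.exp (-1 / 2))) := by
  have hb : Summable (fun l : ℕ => Real.exp 2 * ((1 / 2) ^ l / (l.factorial : ℝ))) :=
    (Real.summable_pow_div_factorial (1 / 2)).mul_left _
  have hmain : Tendsto (fun n : ℕ => ∑' l, scrG n l) atTop (nhds (∑' l, scrL l)) :=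
    tendsto_tsum_of_dominated_convergence hb scrG_tendsto
      (Eventually.of_forall fun n => scrG_bound n)
  rw [scrL_tsum] at hmain
  refine hmain.congr fun n => ?_
  rw [tsum_eq_sum (s := Finset.Icc 1 (n / 2)) (fun l hl => by simp [scrG, hl])]
  exact Finset.sum_congr rfl fun l hl => by simp [scrG, hl, scrTerm]
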